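/- Let X, Y be two compact topological spaces endowed with continuous functions φ: X → ℝⁿ and ψ: Y → ℝⁿ. Then for every integer k, d_T(H_k^{(X,φ)}, H_k^{(Y,ψ)}) ≤ δ((X,φ), (Y,ψ)), i.e. the pseudo-distance d_T between the k-th persistent homology groups is a lower bound for the natural pseudo-distance. -/

import Mathlib

open CategoryTheory

/-- The "chains with coefficients in `G`" functor `S ↦ S →₀ G`. -/
@[simps]
noncomputable def coeffFunctor (G : Type) [AddCommGroup G] : Type ⥤ AddCommGrpCat where
  obj S := AddCommGrpCat.of (S →₀ G)
  map f := AddCommGrpCat.ofHom (Finsupp.mapDomain.addMonoidHom f)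
  map_id S := AddCommGrpCat.hom_ext Finsupp.mapDomain.addMonoidHom_id
  map_comp f g := AddCommGrpCat.hom_ext (Finsupp.mapDomain.addMonoidHom_comp g f)

/-- The singular chain complex with coefficients in the abelian group `G`. -/
noncomputable def singularChainComplexFunctor (G : Type) [AddCommGroup G] :
    TopCat.{0} ⥤ ChainComplex AddCommGrpCat ℕ :=
  TopCat.toSSet ⋙ ((SimplicialObject.whiskering (Type 0) AddCommGrpCat).obj (coeffFunctor G)) ⋙
    AlgebraicTopology.alternatingFaceMapComplex AddCommGrpCat

/-- Singular homology with coefficients in `G`, in degree `k : ℤ` (trivial in negative degrees). -/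
noncomputable def singularHomologyFunctor (G : Type) [AddCommGroup G] (k : ℤ) :
    TopCat.{0} ⥤ AddCommGrpCat :=
  if 0 ≤ k then
    singularChainComplexFunctor G ⋙ HomologicalComplex.homologyFunctor AddCommGrpCat _ k.toNat
  else (Functor.const _).obj (AddCommGrpCat.of PUnit)

/-- The sublevel set `X⟨φ ≼ u⟩`. -/
def sublevelSet {n : ℕ} {X : Type} (φ : X → Fin n → ℝ) (u : Fin n → ℝ) : Set X :=
  {x | ∀ i, φ x i ≤ u i}

/-- The sublevel set as a topological space. -/
def sublevelTop {n : ℕ} {X : Type} [TopologicalSpace X] (φ : X → Fin n → ℝ)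
    (u : Fin n → ℝ) : TopCat.{0} :=
  TopCat.of (sublevelSet φ u)

/-- The inclusion of sublevel sets. -/
def sublevelIncl {n : ℕ} {X : Type} [TopologicalSpace X] (φ : X → Fin n → ℝ)
    {u v : Fin n → ℝ} (h : ∀ i, u i ≤ v i) : sublevelTop φ u ⟶ sublevelTop φ v :=
  TopCat.ofHom <| ContinuousMap.mk (Set.inclusion (fun _x hx i => le_trans (hx i) (h i)))
    (continuous_inclusion _)

/-- The multidimensional `k`-th persistent homology group of `(X, φ)` at `(u, v)`,
with coefficients in the abelian group `G`: the image of the homomorphism induced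
in homology by the inclusion of sublevel sets. -/
noncomputable def persistentHomologyGroup (G : Type) [AddCommGroup G] (k : ℤ)
    {n : ℕ} {X : Type} [TopologicalSpace X] (φ : X → Fin n → ℝ)
    {u v : Fin n → ℝ} (h : ∀ i, u i ≤ v i) : Type :=
  AddMonoidHom.range ((singularHomologyFunctor G k).map (sublevelIncl φ h)).hom

noncomputable instance (G : Type) [AddCommGroup G] (k : ℤ)
    {n : ℕ} {X : Type} [TopologicalSpace X] (φ : X → Fin n → ℝ)
    {u v : Fin n → ℝ} (h : ∀ i, u i ≤ v i) :
    AddCommGroup (persistentHomologyGroup G k φ h) := by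
  unfold persistentHomologyGroup; infer_instance

/-- There is a surjective homomorphism from a subgroup of `A` onto `B`. -/
def ExistsSurjHomFromSubgroup (A B : Type) [AddCommGroup A] [AddCommGroup B] : Prop :=
  ∃ (S : AddSubgroup A) (f : S →+ B), Function.Surjective f

/-- The set `E` of all `ε ≥ 0` such that, for every `(u,v) ∈ Δ⁺`, surjective homomorphisms
exist from a subgroup of `H_k^{(X,φ)}(u,v)` onto `H_k^{(Y,ψ)}(u-ε⃗,v+ε⃗)` and from a subgroup of
`H_k^{(Y,ψ)}(u,v)` onto `H_k^{(X,φ)}(u-ε⃗,v+ε⃗)`. -/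
def dTSet (G : Type) [AddCommGroup G] (k : ℤ) {n : ℕ} {X Y : Type}
    [TopologicalSpace X] [TopologicalSpace Y]
    (φ : X → Fin n → ℝ) (ψ : Y → Fin n → ℝ) : Set ℝ :=
  {ε | ∃ hε : 0 ≤ ε, ∀ u v : Fin n → ℝ, ∀ h : ∀ i, u i < v i,
    ExistsSurjHomFromSubgroup
      (persistentHomologyGroup G k φ (fun i => (h i).le))
      (persistentHomologyGroup G k ψ
        (u := fun i => u i - ε) (v := fun i => v i + ε)
        (fun i => by have := (h i).le; (try dsimp only); linarith)) ∧
    ExistsSurjHomFromSubgroup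
      (persistentHomologyGroup G k ψ (fun i => (h i).le))
      (persistentHomologyGroup G k φ
        (u := fun i => u i - ε) (v := fun i => v i + ε)
        (fun i => by have := (h i).le; (try dsimp only); linarith))}

/-- The pseudo-distance `d_T` between the `k`-th persistent homology groups of `(X,φ)`
and `(Y,ψ)`: the infimum of the set `E` (`∞` if `E` is empty). -/
noncomputable def dT (G : Type) [AddCommGroup G] (k : ℤ) {n : ℕ} {X Y : Type}
    [TopologicalSpace X] [TopologicalSpace Y]
    (φ : X → Fin n → ℝ) (ψ : Y → Fin n → ℝ) : ENNReal :=
  sInf (ENNReal.ofReal '' dTSet G k φ ψ)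

/-- The sup-norm (max-norm) distance between two `ℝⁿ`-valued functions. -/
noncomputable def supNormDist {n : ℕ} {X : Type} (φ ψ : X → Fin n → ℝ) : ENNReal :=
  ⨆ (x : X) (i : Fin n), ENNReal.ofReal |φ x i - ψ x i|

/-- The natural pseudo-distance between `(X,φ)` and `(Y,ψ)`:
`inf_h ‖φ - ψ ∘ h‖_∞` over all homeomorphisms `h : X → Y` (`∞` if none exists). -/
noncomputable def naturalPseudoDistance {n : ℕ} {X Y : Type}
    [TopologicalSpace X] [TopologicalSpace Y]
    (φ : X → Fin n → ℝ) (ψ : Y → Fin n → ℝ) : ENNReal :=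
  ⨅ (h : X ≃ₜ Y), supNormDist φ (fun x => ψ (h x))

lemma existsSurj_range {A' A B C : Type} [AddCommGroup A'] [AddCommGroup A]
    [AddCommGroup B] [AddCommGroup C]
    (p : A' →+ A) (f : A →+ B) (g : B →+ C) (e : A' →+ C)
    (he : ∀ a, e a = g (f (p a))) :
    ExistsSurjHomFromSubgroup f.range e.range := by
  refine ⟨AddSubgroup.comap (g.comp f.range.subtype) e.range,
    AddMonoidHom.codRestrict ((g.comp f.range.subtype).comp (AddSubgroup.subtype _)) e.range
      (fun s => s.2), ?_⟩
  rintro ⟨c, a, rfl⟩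
  refine ⟨⟨⟨f (p a), ⟨p a, rfl⟩⟩, ⟨a, he a⟩⟩, ?_⟩
  exact Subtype.ext (he a).symm

lemma key_surj (G : Type) [AddCommGroup G] (k : ℤ) {n : ℕ} {X Y : Type}
    [TopologicalSpace X] [TopologicalSpace Y]
    (φ : X → Fin n → ℝ) (ψ : Y → Fin n → ℝ) (h : X ≃ₜ Y) (ε : ℝ)
    (hb : ∀ x i, |φ x i - ψ (h x) i| ≤ ε)
    (u v : Fin n → ℝ) (huv : ∀ i, u i ≤ v i)
    (huv' : ∀ i, (fun i => u i - ε) i ≤ (fun i => v i + ε) i) :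
    ExistsSurjHomFromSubgroup (persistentHomologyGroup G k φ huv)
      (persistentHomologyGroup G k ψ (u := fun i => u i - ε) (v := fun i => v i + ε) huv') := by
  let F := singularHomologyFunctor G k
  let f1 : sublevelTop ψ (fun i => u i - ε) ⟶ sublevelTop φ u := by
    refine TopCat.ofHom (ContinuousMap.mk (fun y => ⟨h.symm y.1, fun i => ?_⟩)
      (Continuous.subtype_mk (h.symm.continuous.comp continuous_subtype_val) _))
    have h1 := (abs_le.1 (hb (h.symm y.1) i)).2
    have h2 := y.2 i
    rw [h.apply_symm_apply] at h1
    dsimp only at h2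
    linarith
  let f2 : sublevelTop φ v ⟶ sublevelTop ψ (fun i => v i + ε) := by
    refine TopCat.ofHom (ContinuousMap.mk (fun x => ⟨h x.1, fun i => ?_⟩)
      (Continuous.subtype_mk (h.continuous.comp continuous_subtype_val) _))
    have h1 := (abs_le.1 (hb x.1 i)).1
    have h2 := x.2 i
    dsimp only
    linarith
  have hcomp : f1 ≫ sublevelIncl φ huv ≫ f2 = sublevelIncl ψ huv' := by
    ext y
    apply Subtype.ext
    show h (h.symm y.1) = y.1
    exact h.apply_symm_apply y.1
  have he : ∀ a, F.map (sublevelIncl ψ huv') a =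
      F.map f2 (F.map (sublevelIncl φ huv) (F.map f1 a)) := by
    intro a
    rw [← hcomp, F.map_comp, F.map_comp]
    rfl
  exact existsSurj_range (F.map f1).hom (F.map (sublevelIncl φ huv)).hom (F.map f2).hom
    (F.map (sublevelIncl ψ huv')).hom he

/-- **Theorem (lower bound for the natural pseudo-distance).** Let `X`, `Y` be two compact
topological spaces endowed with continuous functions `φ : X → ℝⁿ`, `ψ : Y → ℝⁿ`. Then, for
every integer `k`, `d_T(H_k^{(X,φ)}, H_k^{(Y,ψ)}) ≤ δ((X,φ), (Y,ψ))`. -/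
theorem dT_le_naturalPseudoDistance (G : Type) [AddCommGroup G] (k : ℤ) (n : ℕ)
    {X Y : Type} [TopologicalSpace X] [TopologicalSpace Y]
    [CompactSpace X] [CompactSpace Y]
    (φ : X → Fin n → ℝ) (ψ : Y → Fin n → ℝ) (hφ : Continuous φ) (hψ : Continuous ψ) :
    dT G k φ ψ ≤ naturalPseudoDistance φ ψ := by
  refine le_iInf fun h => ?_
  by_cases hD : supNormDist φ (fun x => ψ (h x)) = ⊤
  · rw [hD]; exact le_top
  set D := supNormDist φ (fun x => ψ (h x)) with hDdef
  set ε := D.toReal with hε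
  have hεnn : 0 ≤ ε := ENNReal.toReal_nonneg
  have hb : ∀ x i, |φ x i - ψ (h x) i| ≤ ε := by
    intro x i
    have h1 : ENNReal.ofReal |φ x i - ψ (h x) i| ≤ D := by
      rw [hDdef, supNormDist]
      exact le_iSup_of_le x (le_iSup_of_le i le_rfl)
    have h2 := ENNReal.toReal_mono hD h1
    rwa [ENNReal.toReal_ofReal (abs_nonneg _)] at h2
  have hb' : ∀ y i, |ψ y i - φ (h.symm y) i| ≤ ε := by
    intro y i
    have := hb (h.symm y) i
    rw [h.apply_symm_apply] at this
    rwa [abs_sub_comm]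
  have hmem : ε ∈ dTSet G k φ ψ := by
    refine ⟨hεnn, fun u v huv => ?_⟩
    constructor
    · exact key_surj G k φ ψ h ε hb u v (fun i => (huv i).le)
        (fun i => by have := (huv i).le; dsimp only; linarith)
    · exact key_surj G k ψ φ h.symm ε hb' u v (fun i => (huv i).le)
        (fun i => by have := (huv i).le; dsimp only; linarith)
  calc dT G k φ ψ ≤ ENNReal.ofReal ε := sInf_le (Set.mem_image_of_mem _ hmem)
    _ = D := ENNReal.ofReal_toReal hD
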